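/- Let W, W' be subspaces of C^n with dim(W) = dim(W'), with orthogonal projectors P^W and P^{W'}. Then ||P^W - P^{W'}|| = ||P^{W^⊥} P^{W'}||, where W^⊥ is the orthogonal complement of W and the norm is the spectral norm. -/

import Mathlib

open ContinuousLinearMap
open scoped InnerProductSpace

set_option maxHeartbeats 1000000

/-- The orthogonal projector onto a subspace `W` of `ℂⁿ`,
viewed as a continuous linear map on the ambient space. -/
noncomputable def projCLM {n : ℕ} (W : Submodule ℂ (EuclideanSpace ℂ (Fin n))) :
    EuclideanSpace ℂ (Fin n) →L[ℂ] EuclideanSpace ℂ (Fin n) :=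
  W.subtypeL.comp W.orthogonalProjectionOnto

section Aux

variable {E : Type*} [NormedAddCommGroup E] [InnerProductSpace ℂ E] [FiniteDimensional ℂ E]

/-- General version of `projCLM` over an abstract inner product space. -/
noncomputable def projG (W : Submodule ℂ E) : E →L[ℂ] E :=
  W.subtypeL.comp W.orthogonalProjectionOnto

lemma le_of_sq_le_sq' {a b : ℝ} (ha : 0 ≤ a) (hb : 0 ≤ b) (h : a ^ 2 ≤ b ^ 2) : a ≤ b := by
  nlinarith

lemma projG_apply (W : Submodule ℂ E) (x : E) :
    projG W x = (W.orthogonalProjectionOnto x : E) := rfl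

lemma projG_mem (W : Submodule ℂ E) (x : E) : projG W x ∈ W := (W.orthogonalProjectionOnto x).2

lemma projG_eq_self (W : Submodule ℂ E) {x : E} (hx : x ∈ W) : projG W x = x := by
  exact W.starProjection_eq_self_iff.mpr hx

lemma projG_pythag (W : Submodule ℂ E) (x : E) :
    ‖x‖ ^ 2 = ‖projG W x‖ ^ 2 + ‖x - projG W x‖ ^ 2 := by
  have hinner : ⟪projG W x, x - projG W x⟫_ℂ = 0 :=
    Submodule.inner_right_of_mem_orthogonal (projG_mem W x)
      (Submodule.sub_starProjection_mem_orthogonal (K := W) x)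
  have hx : x = projG W x + (x - projG W x) := by abel
  calc ‖x‖ ^ 2 = ‖projG W x + (x - projG W x)‖ ^ 2 := by rw [← hx]
    _ = ‖projG W x‖ ^ 2 + ‖x - projG W x‖ ^ 2 := by
      have := norm_add_sq_eq_norm_sq_add_norm_sq_of_inner_eq_zero _ _ hinner
      rw [pow_two, pow_two, pow_two]
      exact this

lemma norm_projG_apply_le (W : Submodule ℂ E) (x : E) : ‖projG W x‖ ≤ ‖x‖ := by
  have := projG_pythag W x
  apply le_of_sq_le_sq' (norm_nonneg _) (norm_nonneg _)
  nlinarith [sq_nonneg ‖x - projG W x‖]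

/-- A lower bound for a linear map between spaces of equal finite dimension transfers
to its adjoint. -/
lemma adjoint_lower_bound {E F : Type*} [NormedAddCommGroup E] [InnerProductSpace ℂ E]
    [NormedAddCommGroup F] [InnerProductSpace ℂ F]
    [FiniteDimensional ℂ E] [FiniteDimensional ℂ F]
    (hd : Module.finrank ℂ E = Module.finrank ℂ F) (T : E →L[ℂ] F) {c : ℝ} (hc : 0 < c)
    (h : ∀ y : E, c * ‖y‖ ≤ ‖T y‖) (x : F) :
    c * ‖x‖ ≤ ‖ContinuousLinearMap.adjoint T x‖ := by
  rcases eq_or_ne x 0 with rfl | hx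
  · simp
  · have hinj : Function.Injective (T : E →ₗ[ℂ] F) := by
      rw [← LinearMap.ker_eq_bot, LinearMap.ker_eq_bot']
      intro a ha
      have h2 := h a
      rw [show T a = 0 from ha, norm_zero] at h2
      have : ‖a‖ ≤ 0 := by nlinarith [norm_nonneg a]
      exact norm_eq_zero.mp (le_antisymm this (norm_nonneg a))
    have hsurj : Function.Surjective (T : E →ₗ[ℂ] F) :=
      (LinearMap.injective_iff_surjective_of_finrank_eq_finrank hd).mp hinj
    obtain ⟨y, hy⟩ := hsurj x
    have hy' : T y = x := hy
    have hy0 : 0 < ‖y‖ := by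
      rcases eq_or_ne y 0 with rfl | hne
      · exact absurd (by rw [← hy']; simp) hx
      · exact norm_pos_iff.mpr hne
    have hx0 : 0 < ‖x‖ := norm_pos_iff.mpr hx
    have hcy : c * ‖y‖ ≤ ‖x‖ := by rw [← hy']; exact h y
    have hinner : ⟪ContinuousLinearMap.adjoint T x, y⟫_ℂ = ⟪x, x⟫_ℂ := by
      rw [ContinuousLinearMap.adjoint_inner_left, hy']
    have hcs : ‖x‖ ^ 2 ≤ ‖ContinuousLinearMap.adjoint T x‖ * ‖y‖ := by
      have h1 : ‖⟪ContinuousLinearMap.adjoint T x, y⟫_ℂ‖ ≤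
          ‖ContinuousLinearMap.adjoint T x‖ * ‖y‖ := norm_inner_le_norm _ _
      rw [hinner] at h1
      have hxx : ‖(⟪x, x⟫_ℂ)‖ = ‖x‖ ^ 2 := by
        rw [inner_self_eq_norm_sq_to_K, norm_pow, RCLike.norm_ofReal,
          abs_of_nonneg (norm_nonneg x)]
      rwa [hxx] at h1
    have hA : 0 ≤ ‖ContinuousLinearMap.adjoint T x‖ := norm_nonneg _
    nlinarith [mul_le_mul_of_nonneg_left hcy hA]

/-- The key symmetry: with equal dimensions, `‖(1 - Q) P‖ ≤ ‖(1 - P) Q‖`. -/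
lemma key_le (W W' : Submodule ℂ E)
    (h : Module.finrank ℂ W = Module.finrank ℂ W') :
    ‖(1 - projG W') * projG W‖ ≤ ‖(1 - projG W) * projG W'‖ := by
  set P := projG W with hPdef
  set Q := projG W' with hQdef
  set β := ‖(1 - P) * Q‖ with hβdef
  have hβ0 : 0 ≤ β := norm_nonneg _
  by_cases hβ1 : 1 ≤ β
  · apply opNorm_le_bound _ hβ0
    intro z
    have h1 : ((1 - Q) * P) z = P z - Q (P z) := by
      simp [mul_apply, sub_apply, one_apply]
    rw [h1]
    have h2 : ‖P z - Q (P z)‖ ≤ ‖P z‖ := by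
      have hp : ‖P z‖ ^ 2 = ‖Q (P z)‖ ^ 2 + ‖P z - Q (P z)‖ ^ 2 := projG_pythag W' (P z)
      apply le_of_sq_le_sq' (norm_nonneg _) (norm_nonneg _)
      nlinarith [sq_nonneg ‖Q (P z)‖]
    calc ‖P z - Q (P z)‖ ≤ ‖P z‖ := h2
      _ ≤ ‖z‖ := norm_projG_apply_le W z
      _ ≤ β * ‖z‖ := by nlinarith [norm_nonneg z]
  · push_neg at hβ1
    have hc2 : (0:ℝ) < 1 - β ^ 2 := by nlinarith
    set c := Real.sqrt (1 - β ^ 2) with hcdef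
    have hc : 0 < c := Real.sqrt_pos.mpr hc2
    have hcsq : c ^ 2 = 1 - β ^ 2 := Real.sq_sqrt hc2.le
    set T : W' →L[ℂ] W := W.orthogonalProjectionOnto.comp W'.subtypeL with hTdef
    have hT : ∀ y : W', c * ‖y‖ ≤ ‖T y‖ := by
      intro y
      have hyW' : (y : E) ∈ W' := y.2
      have hTy : ‖T y‖ = ‖P (y : E)‖ := rfl
      have hQy : Q (y : E) = y := projG_eq_self W' hyW'
      have hsub : ‖(y : E) - P y‖ ≤ β * ‖(y : E)‖ := by
        have h1 : ((1 - P) * Q) (y : E) = (y : E) - P y := by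
          simp [mul_apply, sub_apply, one_apply, hQy]
        calc ‖(y : E) - P y‖ = ‖((1 - P) * Q) (y : E)‖ := by rw [h1]
          _ ≤ β * ‖(y : E)‖ := le_opNorm _ _
      have hpyth : ‖(y : E)‖ ^ 2 = ‖P (y : E)‖ ^ 2 + ‖(y : E) - P (y : E)‖ ^ 2 :=
        projG_pythag W (y : E)
      have hnc : ‖y‖ = ‖(y : E)‖ := rfl
      rw [hTy, hnc]
      apply le_of_sq_le_sq' (by positivity) (norm_nonneg _)
      have hb2 : ‖(y : E) - P y‖ ^ 2 ≤ β ^ 2 * ‖(y : E)‖ ^ 2 := by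
        nlinarith [norm_nonneg ((y : E) - P y), norm_nonneg (y : E)]
      nlinarith
    have hadj : W'.orthogonalProjectionOnto.comp W.subtypeL = ContinuousLinearMap.adjoint T := by
      rw [ContinuousLinearMap.eq_adjoint_iff]
      intro x y
      simp only [ContinuousLinearMap.comp_apply, hTdef, Submodule.coe_inner,
        Submodule.subtypeL_apply]
      have hL : ⟪((W'.orthogonalProjectionOnto (x : E)) : E), (y : E)⟫_ℂ = ⟪(x : E), (y : E)⟫_ℂ := by
        have h0 : ⟪(x : E) - W'.orthogonalProjectionOnto (x : E), (y : E)⟫_ℂ = 0 :=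
          Submodule.starProjection_inner_eq_zero (K := W') _ _ y.2
        rw [inner_sub_left] at h0
        exact (sub_eq_zero.mp h0).symm
      have hR : ⟪(x : E), ((W.orthogonalProjectionOnto (y : E)) : E)⟫_ℂ = ⟪(x : E), (y : E)⟫_ℂ := by
        have h0 : ⟪(x : E), (y : E) - W.orthogonalProjectionOnto (y : E)⟫_ℂ = 0 :=
          Submodule.inner_right_of_mem_orthogonal x.2
            (Submodule.sub_starProjection_mem_orthogonal (K := W) (y : E))
        rw [inner_sub_right] at h0
        exact ((sub_eq_zero.mp h0)).symm
      rw [hL, hR]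
    have hT' : ∀ x : W, c * ‖x‖ ≤ ‖Q (x : E)‖ := by
      intro x
      have hlb := adjoint_lower_bound h.symm T hc hT x
      rw [← hadj] at hlb
      exact hlb
    apply opNorm_le_bound _ hβ0
    intro z
    have h1 : ((1 - Q) * P) z = P z - Q (P z) := by
      simp [mul_apply, sub_apply, one_apply]
    rw [h1]
    have hu : c * ‖P z‖ ≤ ‖Q (P z)‖ := hT' ⟨P z, projG_mem W z⟩
    have hpyth : ‖P z‖ ^ 2 = ‖Q (P z)‖ ^ 2 + ‖P z - Q (P z)‖ ^ 2 := projG_pythag W' (P z)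
    have hPz : ‖P z‖ ≤ ‖z‖ := norm_projG_apply_le W z
    apply le_of_sq_le_sq' (norm_nonneg _) (by positivity)
    have hu2 : (c * ‖P z‖) ^ 2 ≤ ‖Q (P z)‖ ^ 2 :=
      pow_le_pow_left₀ (mul_nonneg hc.le (norm_nonneg _)) hu 2
    have h3 : ‖P z - Q (P z)‖ ^ 2 ≤ β ^ 2 * ‖P z‖ ^ 2 := by nlinarith [hu2, hcsq, hpyth]
    have h4 : β ^ 2 * ‖P z‖ ^ 2 ≤ β ^ 2 * ‖z‖ ^ 2 := by
      nlinarith [pow_le_pow_left₀ (norm_nonneg (P z)) hPz 2, sq_nonneg β]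
    calc ‖P z - Q (P z)‖ ^ 2 ≤ β ^ 2 * ‖z‖ ^ 2 := le_trans h3 h4
      _ = (β * ‖z‖) ^ 2 := by ring

/-- General version of the main theorem. -/
theorem stmt1G (W W' : Submodule ℂ E)
    (h : Module.finrank ℂ W = Module.finrank ℂ W') :
    ‖projG W - projG W'‖ = ‖(projG Wᗮ).comp (projG W')‖ := by
  set P := projG W with hPdef
  set Q := projG W' with hQdef
  have hperp : projG Wᗮ = 1 - P := by
    refine ContinuousLinearMap.ext fun z => ?_
    have hz : P z + projG Wᗮ z = z :=
      Submodule.starProjection_add_starProjection_orthogonal (K := W) z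
    rw [sub_apply, one_apply_eq_self, eq_sub_iff_add_eq, add_comm]
    exact hz
  have hRHS : (projG Wᗮ).comp Q = (1 - P) * Q := by rw [hperp]; rfl
  rw [hRHS]
  set β := ‖(1 - P) * Q‖ with hβdef
  have hβ0 : 0 ≤ β := norm_nonneg _
  have hPsa : IsSelfAdjoint P := isSelfAdjoint_starProjection W
  have hQsa : IsSelfAdjoint Q := isSelfAdjoint_starProjection W'
  -- ‖P (1-Q)‖ = ‖(1-Q) P‖ via adjoints
  have h1Qsa : IsSelfAdjoint (1 - Q) := (IsSelfAdjoint.one (E →L[ℂ] E)).sub hQsa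
  have hstar : ContinuousLinearMap.adjoint (P * (1 - Q)) = (1 - Q) * P := by
    rw [← star_eq_adjoint, star_mul, h1Qsa.star_eq, hPsa.star_eq]
  have ha_eq : ‖P * (1 - Q)‖ = ‖(1 - Q) * P‖ := by
    rw [← hstar]
    exact (LinearIsometryEquiv.norm_map ContinuousLinearMap.adjoint _).symm
  have hkey : ‖(1 - Q) * P‖ ≤ β := key_le W W' h
  have hkey' : β ≤ ‖(1 - Q) * P‖ := key_le W' W h.symm
  apply le_antisymm
  · -- ‖P - Q‖ ≤ β
    apply opNorm_le_bound _ hβ0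
    intro z
    set u := (P * (1 - Q)) z with hudef
    set v := ((1 - P) * Q) z with hvdef
    have hdecomp : (P - Q) z = u - v := by
      simp only [hudef, hvdef, mul_apply_eq_comp, sub_apply, one_apply_eq_self, map_sub]
      abel
    have huW : u ∈ W := projG_mem W _
    have hvW : v ∈ Wᗮ := by
      have : v = Q z - projG W (Q z) := by
        simp [hvdef, mul_apply_eq_comp, sub_apply, one_apply_eq_self, hPdef]
      rw [this]
      exact Submodule.sub_starProjection_mem_orthogonal (K := W) (Q z)
    have hinner : ⟪u, v⟫_ℂ = 0 := Submodule.inner_right_of_mem_orthogonal huW hvW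
    have hpyth : ‖u - v‖ ^ 2 = ‖u‖ ^ 2 + ‖v‖ ^ 2 := by
      have h0 : ⟪u, -v⟫_ℂ = 0 := by rw [inner_neg_right, hinner, neg_zero]
      have h2 := norm_add_sq_eq_norm_sq_add_norm_sq_of_inner_eq_zero u (-v) h0
      rw [pow_two, pow_two, pow_two, sub_eq_add_neg]
      simpa using h2
    -- bound on u
    have hQz : Q ((1 - Q) z) = 0 := by
      have : Q (Q z) = Q z := projG_eq_self W' (projG_mem W' z)
      simp [sub_apply, one_apply_eq_self, map_sub, this]
    have hu_eq : (P * (1 - Q)) ((1 - Q) z) = u := by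
      simp only [mul_apply_eq_comp, sub_apply, one_apply_eq_self, hudef]
      rw [show Q (z - Q z) = 0 by simpa [sub_apply, one_apply_eq_self] using hQz]
      simp
    have hu_le : ‖u‖ ≤ ‖(1 - Q) * P‖ * ‖(1 - Q) z‖ := by
      rw [← ha_eq, ← hu_eq]
      exact le_opNorm _ _
    have hu_le' : ‖u‖ ≤ β * ‖(1 - Q) z‖ := le_trans hu_le
      (by nlinarith [norm_nonneg ((1 - Q) z), hkey])
    -- bound on v
    have hv_eq : ((1 - P) * Q) (Q z) = v := by
      have : Q (Q z) = Q z := projG_eq_self W' (projG_mem W' z)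
      simp only [mul_apply_eq_comp, sub_apply, one_apply_eq_self, hvdef, this]
    have hv_le : ‖v‖ ≤ β * ‖Q z‖ := by
      rw [← hv_eq]
      exact le_opNorm _ _
    -- Pythagoras for z w.r.t. W'
    have hz : ‖z‖ ^ 2 = ‖Q z‖ ^ 2 + ‖(1 - Q) z‖ ^ 2 := by
      have hp : ‖z‖ ^ 2 = ‖Q z‖ ^ 2 + ‖z - Q z‖ ^ 2 := projG_pythag W' z
      simpa [sub_apply, one_apply_eq_self] using hp
    rw [hdecomp]
    apply le_of_sq_le_sq' (norm_nonneg _) (by positivity)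
    have hQz0 : 0 ≤ ‖Q z‖ := norm_nonneg _
    have h1Qz0 : 0 ≤ ‖(1 - Q) z‖ := norm_nonneg _
    have hu0 : 0 ≤ ‖u‖ := norm_nonneg _
    have hv0 : 0 ≤ ‖v‖ := norm_nonneg _
    calc ‖u - v‖ ^ 2 = ‖u‖ ^ 2 + ‖v‖ ^ 2 := hpyth
      _ ≤ (β * ‖(1 - Q) z‖) ^ 2 + (β * ‖Q z‖) ^ 2 := by nlinarith
      _ = β ^ 2 * (‖Q z‖ ^ 2 + ‖(1 - Q) z‖ ^ 2) := by ring
      _ = β ^ 2 * ‖z‖ ^ 2 := by rw [← hz]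
      _ = (β * ‖z‖) ^ 2 := by ring
  · -- β ≤ ‖P - Q‖
    apply opNorm_le_bound _ (norm_nonneg _)
    intro z
    have h1 : ((1 - P) * Q) z = -((P - Q) (Q z)) := by
      have : Q (Q z) = Q z := projG_eq_self W' (projG_mem W' z)
      simp only [mul_apply_eq_comp, sub_apply, one_apply_eq_self, this]
      abel
    rw [h1, norm_neg]
    calc ‖(P - Q) (Q z)‖ ≤ ‖P - Q‖ * ‖Q z‖ := le_opNorm _ _
      _ ≤ ‖P - Q‖ * ‖z‖ := by
          have := norm_projG_apply_le W' z
          nlinarith [norm_nonneg (P - Q)]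

end Aux

/-- If `dim W = dim W'`, then `‖P^W - P^{W'}‖ = ‖P^{W^⊥} P^{W'}‖`. -/
theorem stmt1 {n : ℕ} (W W' : Submodule ℂ (EuclideanSpace ℂ (Fin n)))
    (h : Module.finrank ℂ W = Module.finrank ℂ W') :
    ‖projCLM W - projCLM W'‖ = ‖(projCLM Wᗮ).comp (projCLM W')‖ := by
  have := stmt1G W W' h
  exact this
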